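/- Let Y ⊂ ℝ^n be a k-dimensional real subspace with Y^⊥ ⊄ {pⱼ = 0} for all j, let a ∈ (ℝ_{>0})^n, and let x ∈ ℝ^n. Then every solution p ∈ (ℂ^×)^n of the system Σⱼ αⱼpⱼ = 0 (for all α ∈ Y) and Σⱼ βⱼ(xⱼ − aⱼ/pⱼ) = 0 (for all β ∈ Y^⊥) corresponds, via pⱼ = aⱼ/fⱼ(u), to a critical point u of the real master function Σⱼ aⱼ log|fⱼ| on the real complement; in particular, all such solutions p are real. -/

import Mathlib

lemma mem_of_forall_perp {n : ℕ} (Y : Submodule ℝ (Fin n → ℝ)) (w : Fin n → ℝ)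
    (h : ∀ β : Fin n → ℝ, (∀ y ∈ Y, ∑ j, β j * y j = 0) → ∑ j, β j * w j = 0) :
    w ∈ Y := by
  let e : EuclideanSpace ℝ (Fin n) ≃ₗ[ℝ] (Fin n → ℝ) := WithLp.linearEquiv 2 ℝ (Fin n → ℝ)
  let Y' : Submodule ℝ (EuclideanSpace ℝ (Fin n)) := Y.comap e.toLinearMap
  have hY' : Y'ᗮᗮ = Y' := Submodule.orthogonal_orthogonal Y'
  have hw : (e.symm w) ∈ Y'ᗮᗮ := by
    rw [Submodule.mem_orthogonal]
    intro β hβ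
    have hβY : ∀ y ∈ Y, ∑ j, (e β) j * y j = 0 := by
      intro y hy
      have hy' : e.symm y ∈ Y' := by
        simp [Y', Submodule.mem_comap, e, hy]
      have h0 : (inner ℝ (e.symm y) β : ℝ) = 0 := hβ (e.symm y) hy'
      rw [PiLp.inner_apply] at h0
      simpa [RCLike.inner_apply, mul_comm, e] using h0
    have := h (e β) hβY
    have h0 : (inner ℝ β (e.symm w) : ℝ) = ∑ j, (e β) j * w j := by
      rw [PiLp.inner_apply]
      simp [RCLike.inner_apply, e, mul_comm]
    rw [h0, this]
  rw [hY'] at hw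
  simpa [Y', Submodule.mem_comap, e] using hw

/-- The real span `Y ⊂ ℝⁿ` of the rows `bⁱ = (bⁱ₁, …, bⁱₙ)`. -/
noncomputable def rowSpanR (n k : ℕ) (b : Fin n → Fin k → ℝ) :
    Submodule ℝ (Fin n → ℝ) :=
  Submodule.span ℝ (Set.range fun i : Fin k => fun j : Fin n => b j i)

/-- Reality: for real data `b`, positive weights `a` and real `x`, every complex
solution `p ∈ (ℂ^×)ⁿ` of the system `∑ αⱼ pⱼ = 0` (α ∈ Y), `∑ βⱼ(xⱼ − aⱼ/pⱼ) = 0`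
(β ∈ Y^⊥) corresponds, via `pⱼ = aⱼ/fⱼ(u)`, to a critical point `u` of the real
master function `∑ aⱼ log |fⱼ|` on the real complement; in particular all such
solutions `p` are real. -/
theorem stmt_15 (n k : ℕ) (b : Fin n → Fin k → ℝ) (a : Fin n → ℝ)
    (ha : ∀ j, 0 < a j) (x : Fin n → ℝ)
    (hspan : ∀ t : Fin k → ℝ, (∀ j, ∑ i, b j i * t i = 0) → t = 0)
    (hperp : ∀ j, ∃ β : Fin n → ℝ,
      (∀ y ∈ rowSpanR n k b, ∑ j', β j' * y j' = 0) ∧ β j ≠ 0)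
    (p : Fin n → ℂ) (hp : ∀ j, p j ≠ 0)
    (h1 : ∀ α : Fin n → ℝ, (fun j => α j) ∈ rowSpanR n k b →
      ∑ j, (α j : ℂ) * p j = 0)
    (h2 : ∀ β : Fin n → ℝ, (∀ y ∈ rowSpanR n k b, ∑ j, β j * y j = 0) →
      ∑ j, (β j : ℂ) * ((x j : ℂ) - (a j : ℂ) / p j) = 0) :
    ∃ u : Fin k → ℝ,
      (∀ j, (∑ i, b j i * u i) + x j ≠ 0) ∧
      (∀ i, ∑ j, b j i * (a j / ((∑ i', b j i' * u i') + x j)) = 0) ∧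
      (∀ j, p j = ((a j / ((∑ i, b j i * u i) + x j) : ℝ) : ℂ)) := by
  classical
  set c : Fin n → ℂ := fun j => (x j : ℂ) - (a j : ℂ) / p j with hc
  -- real and imaginary parts of c lie in Y
  have hre : (fun j => (c j).re) ∈ rowSpanR n k b := by
    apply mem_of_forall_perp
    intro β hβ
    have h0 := h2 β hβ
    have := congrArg Complex.re h0
    simpa [Complex.re_sum, Complex.mul_re, c] using this
  have him : (fun j => (c j).im) ∈ rowSpanR n k b := by
    apply mem_of_forall_perp
    intro β hβ
    have h0 := h2 β hβ
    have := congrArg Complex.im h0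
    simpa [Complex.im_sum, Complex.mul_im, c] using this
  rw [rowSpanR, Submodule.mem_span_range_iff_exists_fun ℝ] at hre him
  obtain ⟨s, hs⟩ := hre
  obtain ⟨v, hv⟩ := him
  have hsj : ∀ j, ∑ i, s i * b j i = (c j).re := by
    intro j
    have := congrFun hs j
    simpa using this
  have hvj : ∀ j, ∑ i, v i * b j i = (c j).im := by
    intro j
    have := congrFun hv j
    simpa using this
  set g : Fin n → ℝ := fun j => (c j).im with hg
  set d : Fin n → ℝ := fun j => x j - (c j).re with hd
  -- a_j / p_j = d_j - g_j I
  have hap : ∀ j, (a j : ℂ) / p j = (d j : ℂ) - (g j : ℂ) * Complex.I := by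
    intro j
    have : (a j : ℂ) / p j = (x j : ℂ) - c j := by rw [hc]; ring
    rw [this]
    apply Complex.ext <;> simp [d, g]
  have hane : ∀ j, (a j : ℂ) ≠ 0 := fun j => by
    exact_mod_cast (ha j).ne'
  have hDne : ∀ j, (d j : ℂ) - (g j : ℂ) * Complex.I ≠ 0 := by
    intro j
    rw [← hap j]
    exact div_ne_zero (hane j) (hp j)
  have hpj : ∀ j, p j = (a j : ℂ) / ((d j : ℂ) - (g j : ℂ) * Complex.I) := by
    intro j
    rw [eq_div_iff (hDne j), ← hap j, mul_comm, div_mul_cancel₀ _ (hp j)]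
  -- column relations
  have hcol : ∀ i, ∑ j, (b j i : ℂ) * p j = 0 := by
    intro i
    exact h1 (fun j => b j i) (Submodule.subset_span (Set.mem_range_self i))
  -- ∑ g_j p_j = 0
  have hgc : ∀ j, (g j : ℂ) = ∑ i, (v i : ℂ) * (b j i : ℂ) := by
    intro j
    have h' : g j = ∑ i, v i * b j i := (hvj j).symm
    rw [h']
    push_cast
    rfl
  have hgp : ∑ j, (g j : ℂ) * p j = 0 := by
    calc ∑ j, (g j : ℂ) * p j = ∑ j, ∑ i, (v i : ℂ) * ((b j i : ℂ) * p j) := by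
          refine Finset.sum_congr rfl fun j _ => ?_
          rw [hgc j, Finset.sum_mul]
          exact Finset.sum_congr rfl fun i _ => by ring
      _ = ∑ i, (v i : ℂ) * ∑ j, (b j i : ℂ) * p j := by
          rw [Finset.sum_comm]
          exact Finset.sum_congr rfl fun i _ => by rw [Finset.mul_sum]
      _ = 0 := by simp [hcol]
  -- imaginary part: each g_j = 0
  have hden : ∀ j, 0 < d j ^ 2 + g j ^ 2 := by
    intro j
    rcases lt_or_eq_of_le (by positivity : (0:ℝ) ≤ d j ^ 2 + g j ^ 2) with h' | h'
    · exact h'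
    · exfalso
      have hd0 : d j = 0 ∧ g j = 0 := by
        constructor <;> nlinarith [sq_nonneg (d j), sq_nonneg (g j)]
      exact hDne j (by simp [hd0.1, hd0.2])
  have himterm : ∀ j, ((g j : ℂ) * p j).im = a j * g j ^ 2 / (d j ^ 2 + g j ^ 2) := by
    intro j
    rw [hpj j]
    have : (g j : ℂ) * ((a j : ℂ) / ((d j : ℂ) - (g j : ℂ) * Complex.I)) =
        ((g j * a j : ℝ) : ℂ) / ((d j : ℂ) - (g j : ℂ) * Complex.I) := by
      push_cast; ring
    rw [this, Complex.div_im]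
    simp [Complex.normSq_apply]
    ring
  have hg0 : ∀ j, g j = 0 := by
    have hsum : ∑ j, a j * g j ^ 2 / (d j ^ 2 + g j ^ 2) = 0 := by
      have := congrArg Complex.im hgp
      rw [Complex.im_sum] at this
      simpa [himterm] using this
    intro j
    have h0 := (Finset.sum_eq_zero_iff_of_nonneg (fun j _ => by have h1 := (ha j).le; have h2 := hden j; positivity)).mp hsum j (Finset.mem_univ j)
    have hgj2 : a j * g j ^ 2 = 0 := by
      have := hden j
      field_simp at h0
      simpa using h0
    have := (mul_eq_zero.mp hgj2).resolve_left (ha j).ne'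
    exact pow_eq_zero_iff (by norm_num) |>.mp this
  -- conclude
  refine ⟨fun i => -(s i), ?_, ?_, ?_⟩
  all_goals
    have hF : ∀ j, (∑ i, b j i * -(s i)) + x j = d j := by
      intro j
      have : ∑ i, b j i * -(s i) = -∑ i, s i * b j i := by
        rw [← Finset.sum_neg_distrib]
        exact Finset.sum_congr rfl fun i _ => by ring
      rw [this, hsj j, hd]
      ring
  · -- denominators nonzero
    intro j
    rw [hF j]
    intro hd0
    exact hDne j (by simp [hd0, hg0 j])
  · -- criticality
    intro i
    have h0 := hcol i
    have hpreal : ∀ j, p j = ((a j / d j : ℝ) : ℂ) := by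
      intro j
      rw [hpj j, hg0 j]
      push_cast
      simp
    rw [Finset.sum_congr rfl (fun j _ => by rw [hpreal j])] at h0
    have : ((∑ j, b j i * (a j / d j) : ℝ) : ℂ) = 0 := by
      push_cast
      exact_mod_cast h0
    have hreal : ∑ j, b j i * (a j / d j) = 0 := by exact_mod_cast this
    calc ∑ j, b j i * (a j / ((∑ i', b j i' * -(s i')) + x j))
        = ∑ j, b j i * (a j / d j) := Finset.sum_congr rfl fun j _ => by rw [hF j]
      _ = 0 := hreal
  · -- reality of p
    intro j
    rw [hF j, hpj j, hg0 j]
    push_cast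
    simp
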